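/- Let n ≥ 1, let c be a real number with c ≤ 0, and let x_1, …, x_n ∈ {0,1} (viewed as reals). Then c·∏_{i=1}^n x_i = min_{w ∈ {0,1}} ( ∑_{i=1}^n c·w·x_i − (n−1)·c·w ). In particular, in the resulting pairwise form every product term w·x_i carries the coefficient c ≤ 0, i.e., all constructed pairwise coefficients are non-positive. -/

import Mathlib

/-- Ishikawa reduction for an order-`n` potential with non-positive coefficient `c`:
`c·∏ᵢ xᵢ = min_{w ∈ {0,1}} (∑ᵢ c·w·xᵢ − (n−1)·c·w)`, and in the resulting pairwise
form every product term `w·xᵢ` carries the non-positive coefficient `c`. -/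
theorem ishikawa_nonpositive_coefficient (n : ℕ) (hn : 1 ≤ n) (c : ℝ) (hc : c ≤ 0)
    (x : Fin n → ℝ) (hx : ∀ i, x i = 0 ∨ x i = 1) :
    c * ∏ i, x i =
      ({0, 1} : Finset ℝ).inf' (Finset.insert_nonempty 0 {1})
        (fun w => (∑ i, c * w * x i) - ((n : ℝ) - 1) * c * w) ∧
    c ≤ 0 := by
  refine ⟨?_, hc⟩
  have hinf : ({0, 1} : Finset ℝ).inf' (Finset.insert_nonempty 0 {1})
      (fun w => (∑ i, c * w * x i) - ((n : ℝ) - 1) * c * w)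
      = min 0 ((∑ i, c * x i) - ((n : ℝ) - 1) * c) := by
    rw [Finset.inf'_insert, Finset.inf'_singleton]
    simp [min_comm]
    exact Finset.singleton_nonempty 1
  have hsc : ∑ i, c * x i = c * ∑ i, x i := by rw [Finset.mul_sum]
  rw [hinf, hsc]
  by_cases hall : ∀ i, x i = 1
  · have hp : ∏ i, x i = 1 := Finset.prod_eq_one fun i _ => hall i
    have hs : ∑ i, x i = (n : ℝ) := by simp [hall]
    rw [hp, hs, min_eq_right (by nlinarith)]
    ring
  · push_neg at hall
    obtain ⟨j, hj⟩ := hall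
    have hj0 : x j = 0 := (hx j).resolve_right hj
    have hp : ∏ i, x i = 0 := Finset.prod_eq_zero (Finset.mem_univ j) hj0
    have hsum : ∑ i, x i ≤ (n : ℝ) - 1 := by
      rw [← Finset.sum_erase_add _ _ (Finset.mem_univ j), hj0, add_zero]
      calc ∑ i ∈ Finset.univ.erase j, x i
          ≤ ∑ _i ∈ Finset.univ.erase j, (1 : ℝ) :=
            Finset.sum_le_sum fun i _ => by rcases hx i with h | h <;> simp [h]
        _ = (n : ℝ) - 1 := by
            simp [Finset.card_erase_of_mem]
            push_cast [Nat.cast_sub hn]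
            ring
    rw [hp, min_eq_left (by nlinarith)]
    ring
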